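/- Let q be odd and ψ a nontrivial additive character of F_q. Then (1/2) ∑_{u,x ∈ F_q×} ∑_{y ∈ F_q} ψ(u(y² - x² - 1)) = -q. -/

import Mathlib

open scoped Classical

open Finset in
/-- Sum over units of a finite field vs. sum over the whole field. -/
lemma sum_units_eq_aux {F : Type*} [Field F] [Fintype F] (f : F → ℂ) :
    ∑ u : Fˣ, f (u : F) = ∑ a : F, f a - f 0 := by
  classical
  have h : ∑ a ∈ Finset.univ.erase (0 : F), f a = ∑ u : Fˣ, f (u : F) := by
    refine Finset.sum_bij' (fun a ha => Units.mk0 a (Finset.mem_erase.1 ha).1)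
      (fun u _ => (u : F)) ?_ ?_ ?_ ?_ ?_
    · intro a ha; exact Finset.mem_univ _
    · intro u _; exact Finset.mem_erase.2 ⟨u.ne_zero, Finset.mem_univ _⟩
    · intro a ha; rfl
    · intro u _; exact Units.ext rfl
    · intro a ha; rfl
  rw [← h, ← Finset.add_sum_erase _ f (Finset.mem_univ (0 : F))]
  ring

/-- Number of solutions of `y² - x² = 1` in `F × F`. -/
lemma card_sol_aux {F : Type*} [Field F] [Fintype F] (h2 : (2 : F) ≠ 0) :
    (Finset.univ.filter (fun p : F × F => p.2 ^ 2 - p.1 ^ 2 - 1 = 0)).card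
      = Fintype.card F - 1 := by
  classical
  rw [← Fintype.card_units]
  rw [Fintype.card, eq_comm]
  refine Finset.card_bij' (fun s _ => ((((s : F) - ((s⁻¹ : Fˣ) : F)) / 2),
      (((s : F) + ((s⁻¹ : Fˣ) : F)) / 2)))
    (fun p hp => Units.mk0 (p.2 + p.1) ?_) ?_ ?_ ?_ ?_
  · intro h
    have hp' := (Finset.mem_filter.1 hp).2
    have heq : p.2 ^ 2 - p.1 ^ 2 = (p.2 + p.1) * (p.2 - p.1) := by ring
    rw [h, zero_mul] at heq
    rw [heq] at hp'
    simp at hp'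
  · intro s _
    refine Finset.mem_filter.2 ⟨Finset.mem_univ _, ?_⟩
    have hs : (s : F) * ((s⁻¹ : Fˣ) : F) = 1 := by
      rw [← Units.val_mul, mul_inv_cancel, Units.val_one]
    field_simp
    ring_nf; rw [hs]; ring
  · intro p hp; exact Finset.mem_univ _
  · intro s _
    apply Units.ext
    push_cast [Units.val_mk0]
    field_simp
    ring
  · intro p hp
    have hp' := (Finset.mem_filter.1 hp).2
    have hne : p.2 + p.1 ≠ 0 := by
      intro h
      have heq : p.2 ^ 2 - p.1 ^ 2 = (p.2 + p.1) * (p.2 - p.1) := by ring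
      rw [h, zero_mul] at heq
      rw [heq] at hp'
      simp at hp'
    have hinv : ((((Units.mk0 (p.2 + p.1) hne))⁻¹ : Fˣ) : F) = p.2 - p.1 := by
      rw [Units.val_inv_eq_inv_val, Units.val_mk0]
      exact inv_eq_of_mul_eq_one_right (by linear_combination hp')
    have hv : ((Units.mk0 (p.2 + p.1) hne : Fˣ) : F) = p.2 + p.1 := rfl
    refine Prod.ext ?_ ?_ <;> simp only [hinv, hv] <;> field_simp <;> ring

/-- Number of solutions of `y² - x² = 1` with `x` a unit. -/
lemma card_sol_units_aux {F : Type*} [Field F] [Fintype F] (hchar : ringChar F ≠ 2) :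
    (Finset.univ.filter (fun p : Fˣ × F => p.2 ^ 2 - (p.1 : F) ^ 2 - 1 = 0)).card
      = Fintype.card F - 3 := by
  classical
  have h2 : (2 : F) ≠ 0 := Ring.two_ne_zero hchar
  set B : Finset (F × F) := Finset.univ.filter (fun p : F × F => p.2 ^ 2 - p.1 ^ 2 - 1 = 0)
  have hB : B.card = Fintype.card F - 1 := card_sol_aux h2
  have hsplit : (B.filter (fun p => p.1 = 0)).card + (B.filter (fun p => ¬ p.1 = 0)).card
      = B.card := Finset.card_filter_add_card_filter_not _
  have hB0 : (B.filter (fun p => p.1 = 0)) = {((0 : F), (1 : F)), ((0 : F), (-1 : F))} := by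
    ext ⟨a, b⟩
    simp only [B, Finset.mem_filter, Finset.mem_univ, true_and, Finset.mem_insert,
      Finset.mem_singleton, Prod.mk.injEq]
    constructor
    · rintro ⟨hab, ha⟩
      subst ha
      have : b ^ 2 = 1 := by linear_combination hab
      rcases sq_eq_one_iff.mp this with h | h
      · exact Or.inl ⟨rfl, h⟩
      · exact Or.inr ⟨rfl, h⟩
    · rintro (⟨ha, hb⟩ | ⟨ha, hb⟩) <;> subst ha <;> subst hb <;> norm_num
  have hcard0 : (B.filter (fun p => p.1 = 0)).card = 2 := by
    rw [hB0]
    rw [Finset.card_insert_of_notMem, Finset.card_singleton]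
    simp only [Finset.mem_singleton, Prod.mk.injEq, not_and]
    intro _
    exact (Ring.neg_one_ne_one_of_char_ne_two hchar).symm
  have hbij : (B.filter (fun p => ¬ p.1 = 0)).card
      = (Finset.univ.filter (fun p : Fˣ × F => p.2 ^ 2 - (p.1 : F) ^ 2 - 1 = 0)).card := by
    refine Finset.card_bij' (fun p hp => (Units.mk0 p.1 (Finset.mem_filter.1 hp).2, p.2))
      (fun p _ => (((p.1 : Fˣ) : F), p.2)) ?_ ?_ ?_ ?_
    · intro p hp
      have := (Finset.mem_filter.1 (Finset.mem_filter.1 hp).1).2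
      exact Finset.mem_filter.2 ⟨Finset.mem_univ _, this⟩
    · intro p hp
      have := (Finset.mem_filter.1 hp).2
      refine Finset.mem_filter.2 ⟨Finset.mem_filter.2 ⟨Finset.mem_univ _, this⟩, ?_⟩
      exact p.1.ne_zero
    · intro p hp; rfl
    · intro p hp
      refine Prod.ext (Units.ext rfl) rfl
  have hodd := FiniteField.odd_card_of_char_ne_two hchar
  have h1 := Fintype.one_lt_card (α := F)
  omega

theorem stmt18 {F : Type*} [Field F] [Fintype F] (hq : Odd (Fintype.card F))
    (ψ : AddChar F ℂ) (hψ : ψ ≠ 1) :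
    (1 / 2 : ℂ) * ∑ u : Fˣ, ∑ x : Fˣ, ∑ y : F,
        ψ ((u : F) * (y ^ 2 - (x : F) ^ 2 - 1)) = -(Fintype.card F : ℂ) := by
  classical
  obtain ⟨k, hk⟩ := hq
  have hchar : ringChar F ≠ 2 := by
    intro h
    have he := FiniteField.even_card_of_char_two h
    omega
  have hprim := AddChar.IsPrimitive.of_ne_one hψ
  have hstep : ∀ t : F, ∑ u : Fˣ, ψ ((u : F) * t)
      = (if t = 0 then (Fintype.card F : ℂ) else 0) - 1 := by
    intro t
    rw [sum_units_eq_aux (fun a => ψ (a * t))]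
    rw [AddChar.sum_mulShift t hprim]
    simp
  have h1 : ∑ u : Fˣ, ∑ x : Fˣ, ∑ y : F, ψ ((u : F) * (y ^ 2 - (x : F) ^ 2 - 1))
      = ∑ x : Fˣ, ∑ y : F,
          ((if y ^ 2 - (x : F) ^ 2 - 1 = 0 then (Fintype.card F : ℂ) else 0) - 1) := by
    rw [Finset.sum_comm]
    refine Finset.sum_congr rfl fun x _ => ?_
    rw [Finset.sum_comm]
    exact Finset.sum_congr rfl fun y _ => hstep _
  rw [h1]
  rw [show (∑ x : Fˣ, ∑ y : F,
        ((if y ^ 2 - (x : F) ^ 2 - 1 = 0 then (Fintype.card F : ℂ) else 0) - 1))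
      = ∑ p : Fˣ × F,
        ((if p.2 ^ 2 - (p.1 : F) ^ 2 - 1 = 0 then (Fintype.card F : ℂ) else 0) - 1) from
    (Fintype.sum_prod_type (fun p : Fˣ × F =>
      (if p.2 ^ 2 - (p.1 : F) ^ 2 - 1 = 0 then (Fintype.card F : ℂ) else 0) - 1)).symm]
  rw [Finset.sum_sub_distrib, Finset.sum_const, ← Finset.sum_filter, Finset.sum_const]
  rw [card_sol_units_aux hchar, Finset.card_univ, Fintype.card_prod, Fintype.card_units]
  have h1q : 1 ≤ Fintype.card F := Fintype.card_pos
  have h3q : 3 ≤ Fintype.card F := by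
    have := Fintype.one_lt_card (α := F)
    omega
  simp only [nsmul_eq_mul, mul_one]
  push_cast [Nat.cast_sub h3q, Nat.cast_sub h1q]
  ring
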